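/- Let Λ be a row-finite k-graph without sources. Then the following are equivalent: (1) for every x ∈ Λ^∞, the shift-equivalence class [x] is a closed subset of Λ^∞ in the cylinder topology; (2) for every x ∈ Λ^∞, every path in Λ^∞ that is frequently divertable to [x] is shift equivalent to x. -/

import Mathlib

/-- A `k`-graph: a countable small category (objects being identified with their
identity morphisms, so that the morphism set `M` carries everything) together with a
degree functor `d : Λ → ℕ^k` satisfying the unique factorisation property. -/
structure KGraph (k : ℕ) : Type 1 where
  M : Type
  countableM : Countable M
  rng : M → M
  src : M → M
  comp : M → M → M
  d : M → Fin k → ℕ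
  src_src : ∀ a, src (src a) = src a
  rng_src : ∀ a, rng (src a) = src a
  src_rng : ∀ a, src (rng a) = rng a
  rng_rng : ∀ a, rng (rng a) = rng a
  comp_src_self : ∀ a, comp a (src a) = a
  rng_comp_self : ∀ a, comp (rng a) a = a
  rng_comp : ∀ a b, src a = rng b → rng (comp a b) = rng a
  src_comp : ∀ a b, src a = rng b → src (comp a b) = src b
  comp_assoc : ∀ a b c, src a = rng b → src b = rng c →
    comp (comp a b) c = comp a (comp b c)
  d_src : ∀ a, d (src a) = 0
  d_comp : ∀ a b, src a = rng b → d (comp a b) = d a + d b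
  factor : ∀ a (m n : Fin k → ℕ), d a = m + n →
    ∃! p : M × M, src p.1 = rng p.2 ∧ comp p.1 p.2 = a ∧ d p.1 = m ∧ d p.2 = n

namespace KGraph

variable {k : ℕ}

/-- The objects of `Λ`, identified with the identity morphisms. -/
def IsObj (Λ : KGraph k) (v : Λ.M) : Prop := Λ.rng v = v

/-- `Λ` is row-finite: each `vΛ^m` is finite. -/
def RowFinite (Λ : KGraph k) : Prop :=
  ∀ v, Λ.IsObj v → ∀ m : Fin k → ℕ, {a : Λ.M | Λ.rng a = v ∧ Λ.d a = m}.Finite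

/-- `Λ` has no sources: each `vΛ^m` is nonempty. -/
def NoSources (Λ : KGraph k) : Prop :=
  ∀ v, Λ.IsObj v → ∀ m : Fin k → ℕ, ∃ a : Λ.M, Λ.rng a = v ∧ Λ.d a = m

end KGraph

/-- An infinite path of a `k`-graph `Λ`: a degree-preserving functor `x : Ω_k → Λ`,
recorded by its values `seg m n _ = x(m, n)` on the morphisms `(m, n)` (for `m ≤ n`)
of `Ω_k`; the vertex `x(m)` is `seg m m _`. -/
structure InfPath {k : ℕ} (Λ : KGraph k) where
  seg : ∀ m n : Fin k → ℕ, m ≤ n → Λ.M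
  d_seg : ∀ m n (h : m ≤ n), Λ.d (seg m n h) = n - m
  rng_seg : ∀ m n (h : m ≤ n), Λ.rng (seg m n h) = seg m m le_rfl
  src_seg : ∀ m n (h : m ≤ n), Λ.src (seg m n h) = seg n n le_rfl
  comp_seg : ∀ m n p (h1 : m ≤ n) (h2 : n ≤ p),
    Λ.comp (seg m n h1) (seg n p h2) = seg m p (h1.trans h2)

namespace InfPath

variable {k : ℕ} {Λ : KGraph k}

/-- The vertex `x(n)` of an infinite path `x`. -/
def vert (x : InfPath Λ) (n : Fin k → ℕ) : Λ.M := x.seg n n le_rfl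

/-- The shift `σ^p(x)`, given by `σ^p(x)(m, n) = x(m + p, n + p)`. -/
def shift (x : InfPath Λ) (p : Fin k → ℕ) : InfPath Λ where
  seg m n h := x.seg (m + p) (n + p) (add_le_add h (le_refl p))
  d_seg m n h := by
    rw [x.d_seg]
    funext i
    simp only [Pi.sub_apply, Pi.add_apply]
    omega
  rng_seg m n h := x.rng_seg _ _ _
  src_seg m n h := x.src_seg _ _ _
  comp_seg m n p' h1 h2 := x.comp_seg _ _ _ _ _

/-- `x` is shift equivalent to `y` with lag `n ∈ ℤ^k`: there are `p, q ∈ ℕ^k` with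
`p - q = n` and `σ^p(x) = σ^q(y)`. -/
def ShiftEquivLag (x y : InfPath Λ) (n : Fin k → ℤ) : Prop :=
  ∃ p q : Fin k → ℕ, (fun i => (p i : ℤ) - (q i : ℤ)) = n ∧ x.shift p = y.shift q

/-- `x` is shift equivalent to `y`. -/
def ShiftEquiv (x y : InfPath Λ) : Prop := ∃ n : Fin k → ℤ, ShiftEquivLag x y n

/-- `x` is frequently divertable to `[y]`: for every `n ∈ ℕ^k` there is a path in
`x(n)Λ^∞` which is shift equivalent to `y`. -/
def FreqDiv (x y : InfPath Λ) : Prop :=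
  ∀ n : Fin k → ℕ, ∃ z : InfPath Λ, z.vert 0 = x.vert n ∧ ShiftEquiv z y

/-- The cylinder topology on `Λ^∞`, generated by the cylinder sets
`Z(α) = {x : x(0, d(α)) = α}` for morphisms `α` of `Λ`. -/
instance : TopologicalSpace (InfPath Λ) :=
  TopologicalSpace.generateFrom
    {S | ∃ a : Λ.M, S = {x : InfPath Λ | x.seg 0 (Λ.d a) zero_le = a}}

end InfPath

namespace KGraph

variable {k : ℕ} (Λ : KGraph k)

private theorem d_split {a : Λ.M} {m : Fin k → ℕ} (h : m ≤ Λ.d a) :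
    Λ.d a = m + (Λ.d a - m) := by
  funext i
  have := Pi.le_def.mp h i
  simp only [Pi.add_apply, Pi.sub_apply]
  omega

noncomputable def fp (a : Λ.M) (m : Fin k → ℕ) (h : m ≤ Λ.d a) : Λ.M × Λ.M :=
  (Λ.factor a m (Λ.d a - m) (Λ.d_split h)).exists.choose

theorem fp_spec (a : Λ.M) (m : Fin k → ℕ) (h : m ≤ Λ.d a) :
    Λ.src (Λ.fp a m h).1 = Λ.rng (Λ.fp a m h).2 ∧
    Λ.comp (Λ.fp a m h).1 (Λ.fp a m h).2 = a ∧ Λ.d (Λ.fp a m h).1 = m ∧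
    Λ.d (Λ.fp a m h).2 = Λ.d a - m :=
  (Λ.factor a m (Λ.d a - m) (Λ.d_split h)).exists.choose_spec

theorem fp_eq {a : Λ.M} {m : Fin k → ℕ} (h : m ≤ Λ.d a) {p q : Λ.M}
    (h1 : Λ.src p = Λ.rng q) (h2 : Λ.comp p q = a) (h3 : Λ.d p = m) :
    Λ.fp a m h = (p, q) := by
  have hdq : Λ.d q = Λ.d a - m := by
    have hd := Λ.d_comp p q h1
    rw [h2, h3] at hd
    funext i
    have := congrFun hd i
    simp only [Pi.add_apply, Pi.sub_apply] at this ⊢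
    omega
  exact (Λ.factor a m (Λ.d a - m) (Λ.d_split h)).unique (Λ.fp_spec a m h) ⟨h1, h2, h3, hdq⟩

noncomputable def ini (a : Λ.M) (m : Fin k → ℕ) (h : m ≤ Λ.d a) : Λ.M := (Λ.fp a m h).1

noncomputable def tail (a : Λ.M) (m : Fin k → ℕ) (h : m ≤ Λ.d a) : Λ.M := (Λ.fp a m h).2

theorem ini_eq {a : Λ.M} {m : Fin k → ℕ} (h : m ≤ Λ.d a) {p q : Λ.M}
    (h1 : Λ.src p = Λ.rng q) (h2 : Λ.comp p q = a) (h3 : Λ.d p = m) :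
    Λ.ini a m h = p := by
  rw [ini, Λ.fp_eq h h1 h2 h3]

theorem tail_eq {a : Λ.M} {m : Fin k → ℕ} (h : m ≤ Λ.d a) {p q : Λ.M}
    (h1 : Λ.src p = Λ.rng q) (h2 : Λ.comp p q = a) (h3 : Λ.d p = m) :
    Λ.tail a m h = q := by
  rw [tail, Λ.fp_eq h h1 h2 h3]

theorem src_ini (a : Λ.M) (m : Fin k → ℕ) (h : m ≤ Λ.d a) :
    Λ.src (Λ.ini a m h) = Λ.rng (Λ.tail a m h) := (Λ.fp_spec a m h).1

theorem comp_ini_tail (a : Λ.M) (m : Fin k → ℕ) (h : m ≤ Λ.d a) :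
    Λ.comp (Λ.ini a m h) (Λ.tail a m h) = a := (Λ.fp_spec a m h).2.1

theorem d_ini (a : Λ.M) (m : Fin k → ℕ) (h : m ≤ Λ.d a) :
    Λ.d (Λ.ini a m h) = m := (Λ.fp_spec a m h).2.2.1

theorem d_tail (a : Λ.M) (m : Fin k → ℕ) (h : m ≤ Λ.d a) :
    Λ.d (Λ.tail a m h) = Λ.d a - m := (Λ.fp_spec a m h).2.2.2

theorem rng_ini (a : Λ.M) (m : Fin k → ℕ) (h : m ≤ Λ.d a) :
    Λ.rng (Λ.ini a m h) = Λ.rng a := by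
  conv_rhs => rw [← Λ.comp_ini_tail a m h]
  exact (Λ.rng_comp _ _ (Λ.src_ini a m h)).symm

theorem src_tail (a : Λ.M) (m : Fin k → ℕ) (h : m ≤ Λ.d a) :
    Λ.src (Λ.tail a m h) = Λ.src a := by
  conv_rhs => rw [← Λ.comp_ini_tail a m h]
  exact (Λ.src_comp _ _ (Λ.src_ini a m h)).symm

theorem d_rng (a : Λ.M) : Λ.d (Λ.rng a) = 0 := by
  rw [← Λ.src_rng a, Λ.d_src]

theorem ini_congrA {a b : Λ.M} (e : a = b) {m : Fin k → ℕ} (ha : m ≤ Λ.d a)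
    (hb : m ≤ Λ.d b) : Λ.ini a m ha = Λ.ini b m hb := by subst e; rfl

theorem tail_congrA {a b : Λ.M} (e : a = b) {m : Fin k → ℕ} (ha : m ≤ Λ.d a)
    (hb : m ≤ Λ.d b) : Λ.tail a m ha = Λ.tail b m hb := by subst e; rfl

theorem ini_congrM {a : Λ.M} {m m' : Fin k → ℕ} (e : m = m') (ha : m ≤ Λ.d a)
    (hb : m' ≤ Λ.d a) : Λ.ini a m ha = Λ.ini a m' hb := by subst e; rfl

theorem tail_congrM {a : Λ.M} {m m' : Fin k → ℕ} (e : m = m') (ha : m ≤ Λ.d a)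
    (hb : m' ≤ Λ.d a) : Λ.tail a m ha = Λ.tail a m' hb := by subst e; rfl

theorem ini_zero' {a : Λ.M} {m : Fin k → ℕ} (e : m = 0) (h : m ≤ Λ.d a) :
    Λ.ini a m h = Λ.rng a := by
  subst e
  exact Λ.ini_eq h (by rw [Λ.src_rng]) (Λ.rng_comp_self a) (Λ.d_rng a)

theorem tail_zero' {a : Λ.M} {m : Fin k → ℕ} (e : m = 0) (h : m ≤ Λ.d a) :
    Λ.tail a m h = a := by
  subst e
  exact Λ.tail_eq h (by rw [Λ.src_rng]) (Λ.rng_comp_self a) (Λ.d_rng a)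

theorem ini_of_eq_comp {a b c : Λ.M} (e : c = Λ.comp a b) (hab : Λ.src a = Λ.rng b)
    {m : Fin k → ℕ} (ha : m ≤ Λ.d a) (hc : m ≤ Λ.d c) :
    Λ.ini c m hc = Λ.ini a m ha := by
  subst e
  have hcd : Λ.src (Λ.tail a m ha) = Λ.rng b := by rw [Λ.src_tail]; exact hab
  refine Λ.ini_eq hc (q := Λ.comp (Λ.tail a m ha) b) ?_ ?_ (Λ.d_ini _ _ _)
  · rw [Λ.rng_comp _ _ hcd]; exact Λ.src_ini _ _ _
  · rw [← Λ.comp_assoc _ _ _ (Λ.src_ini _ _ _) hcd, Λ.comp_ini_tail]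

theorem tail_of_eq_comp {a b c : Λ.M} (e : c = Λ.comp a b) (hab : Λ.src a = Λ.rng b)
    {m : Fin k → ℕ} (ha : m ≤ Λ.d a) (hc : m ≤ Λ.d c) :
    Λ.tail c m hc = Λ.comp (Λ.tail a m ha) b := by
  subst e
  have hcd : Λ.src (Λ.tail a m ha) = Λ.rng b := by rw [Λ.src_tail]; exact hab
  refine Λ.tail_eq hc (p := Λ.ini a m ha) ?_ ?_ (Λ.d_ini _ _ _)
  · rw [Λ.rng_comp _ _ hcd]; exact Λ.src_ini _ _ _
  · rw [← Λ.comp_assoc _ _ _ (Λ.src_ini _ _ _) hcd, Λ.comp_ini_tail]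

theorem ini_add {a : Λ.M} {q r s : Fin k → ℕ} (e : s = q + r) (hq : q ≤ Λ.d a)
    (hr : r ≤ Λ.d (Λ.tail a q hq)) (hs : s ≤ Λ.d a) :
    Λ.ini a s hs = Λ.comp (Λ.ini a q hq) (Λ.ini (Λ.tail a q hq) r hr) := by
  subst e
  have hcd : Λ.src (Λ.ini a q hq) = Λ.rng (Λ.ini (Λ.tail a q hq) r hr) := by
    rw [Λ.rng_ini]; exact Λ.src_ini _ _ _
  refine Λ.ini_eq hs (q := Λ.tail (Λ.tail a q hq) r hr) ?_ ?_ ?_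
  · rw [Λ.src_comp _ _ hcd]; exact Λ.src_ini _ _ _
  · rw [Λ.comp_assoc _ _ _ hcd (Λ.src_ini _ _ _), Λ.comp_ini_tail, Λ.comp_ini_tail]
  · rw [Λ.d_comp _ _ hcd, Λ.d_ini, Λ.d_ini]

theorem tail_tail {a : Λ.M} {q r s : Fin k → ℕ} (e : s = q + r) (hq : q ≤ Λ.d a)
    (hr : r ≤ Λ.d (Λ.tail a q hq)) (hs : s ≤ Λ.d a) :
    Λ.tail a s hs = Λ.tail (Λ.tail a q hq) r hr := by
  subst e
  have hcd : Λ.src (Λ.ini a q hq) = Λ.rng (Λ.ini (Λ.tail a q hq) r hr) := by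
    rw [Λ.rng_ini]; exact Λ.src_ini _ _ _
  refine Λ.tail_eq hs (p := Λ.comp (Λ.ini a q hq) (Λ.ini (Λ.tail a q hq) r hr)) ?_ ?_ ?_
  · rw [Λ.src_comp _ _ hcd]; exact Λ.src_ini _ _ _
  · rw [Λ.comp_assoc _ _ _ hcd (Λ.src_ini _ _ _), Λ.comp_ini_tail, Λ.comp_ini_tail]
  · rw [Λ.d_comp _ _ hcd, Λ.d_ini, Λ.d_ini]

end KGraph

namespace InfPath

variable {k : ℕ} {Λ : KGraph k}

theorem seg_congr (x : InfPath Λ) {m m' n n' : Fin k → ℕ} (e1 : m = m') (e2 : n = n')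
    (h : m ≤ n) (h' : m' ≤ n') : x.seg m n h = x.seg m' n' h' := by
  subst e1; subst e2; rfl

theorem ext' {x y : InfPath Λ} (h : ∀ m n (hmn : m ≤ n), x.seg m n hmn = y.seg m n hmn) :
    x = y := by
  obtain ⟨f, _, _, _, _⟩ := x
  obtain ⟨g, _, _, _, _⟩ := y
  have : f = g := funext fun m => funext fun n => funext fun hmn => h m n hmn
  subst this
  rfl

theorem shift_shift (x : InfPath Λ) (p q : Fin k → ℕ) :
    (x.shift p).shift q = x.shift (q + p) :=
  ext' fun m n h => x.seg_congr (add_assoc m q p) (add_assoc n q p) _ _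

theorem shift_zero (x : InfPath Λ) : x.shift 0 = x :=
  ext' fun m n h => x.seg_congr (add_zero m) (add_zero n) _ _

theorem shiftEquiv_shift (x : InfPath Λ) (p : Fin k → ℕ) : ShiftEquiv (x.shift p) x :=
  ⟨_, 0, p, rfl, by rw [shift_zero]⟩

theorem ShiftEquiv.trans' {x y z : InfPath Λ} (h1 : ShiftEquiv x y) (h2 : ShiftEquiv y z) :
    ShiftEquiv x z := by
  obtain ⟨_, p, q, -, e1⟩ := h1
  obtain ⟨_, p', q', -, e2⟩ := h2
  refine ⟨_, p' + p, q + q', rfl, ?_⟩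
  calc x.shift (p' + p) = (x.shift p).shift p' := (shift_shift x p p').symm
    _ = (y.shift q).shift p' := by rw [e1]
    _ = y.shift (p' + q) := shift_shift y q p'
    _ = y.shift (q + p') := by rw [add_comm]
    _ = (y.shift p').shift q := (shift_shift y p' q).symm
    _ = (z.shift q').shift q := by rw [e2]
    _ = z.shift (q + q') := shift_shift z q' q

/-- `bb α z n` is the composite `α · z(0, n)`. -/
def bb (α : Λ.M) (z : InfPath Λ) (n : Fin k → ℕ) : Λ.M :=
  Λ.comp α (z.seg 0 n zero_le)

theorem src_rng_bb {α : Λ.M} {z : InfPath Λ} (hsrc : Λ.src α = z.vert 0) (n : Fin k → ℕ) :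
    Λ.src α = Λ.rng (z.seg 0 n zero_le) := by
  rw [z.rng_seg]; exact hsrc

theorem d_bb {α : Λ.M} (N : Fin k → ℕ) {z : InfPath Λ} (hd : Λ.d α = N)
    (hsrc : Λ.src α = z.vert 0) (n : Fin k → ℕ) : Λ.d (bb α z n) = N + n := by
  rw [bb, Λ.d_comp _ _ (src_rng_bb hsrc n), hd, z.d_seg]
  funext i
  simp only [Pi.add_apply, Pi.sub_apply, Pi.zero_apply]
  omega

theorem src_bb {α : Λ.M} {z : InfPath Λ} (hsrc : Λ.src α = z.vert 0) (n : Fin k → ℕ) :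
    Λ.src (bb α z n) = z.seg n n le_rfl := by
  rw [bb, Λ.src_comp _ _ (src_rng_bb hsrc n), z.src_seg]

theorem bb_mono {α : Λ.M} {z : InfPath Λ} (hsrc : Λ.src α = z.vert 0)
    {m n : Fin k → ℕ} (h : m ≤ n) :
    bb α z n = Λ.comp (bb α z m) (z.seg m n h) := by
  rw [bb, bb, ← z.comp_seg 0 m n zero_le h,
    Λ.comp_assoc _ _ _ (src_rng_bb hsrc m) (by rw [z.src_seg, z.rng_seg])]

theorem cseg_pf1 {α : Λ.M} {N : Fin k → ℕ} {z : InfPath Λ} (hd : Λ.d α = N)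
    (hsrc : Λ.src α = z.vert 0) {m n : Fin k → ℕ} (h : m ≤ n) :
    m ≤ Λ.d (bb α z n) := by
  rw [d_bb N hd hsrc n]
  exact Pi.le_def.mpr fun i => by
    have := Pi.le_def.mp h i
    simp only [Pi.add_apply]
    omega

theorem cseg_pf2 {α : Λ.M} {N : Fin k → ℕ} {z : InfPath Λ} (hd : Λ.d α = N)
    (hsrc : Λ.src α = z.vert 0) {m n : Fin k → ℕ} (h : m ≤ n) :
    n - m ≤ Λ.d (Λ.tail (bb α z n) m (cseg_pf1 hd hsrc h)) := by
  rw [Λ.d_tail, d_bb N hd hsrc n]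
  exact Pi.le_def.mpr fun i => by
    have := Pi.le_def.mp h i
    simp only [Pi.add_apply, Pi.sub_apply]
    omega

/-- The segments of the concatenation of `α` with `z`. -/
noncomputable def cseg (α : Λ.M) (N : Fin k → ℕ) (z : InfPath Λ) (hd : Λ.d α = N)
    (hsrc : Λ.src α = z.vert 0) (m n : Fin k → ℕ) (h : m ≤ n) : Λ.M :=
  Λ.ini (Λ.tail (bb α z n) m (cseg_pf1 hd hsrc h)) (n - m) (cseg_pf2 hd hsrc h)

end InfPath

namespace InfPath

variable {k : ℕ} {Λ : KGraph k}

/-- The concatenation of a morphism `α` of degree `N` with an infinite path `z`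
starting at the source of `α`. -/
noncomputable def concat (α : Λ.M) (N : Fin k → ℕ) (z : InfPath Λ) (hd : Λ.d α = N)
    (hsrc : Λ.src α = z.vert 0) : InfPath Λ where
  seg := cseg α N z hd hsrc
  d_seg m n h := by unfold cseg; exact Λ.d_ini _ _ _
  rng_seg m n h := by
    unfold cseg
    refine (Λ.rng_ini _ _ _).trans
      (Eq.trans ?_ (Λ.ini_zero' (by funext i; simp) _).symm)
    rw [← Λ.src_ini, ← Λ.src_ini]
    exact congrArg Λ.src (Λ.ini_of_eq_comp (bb_mono hsrc h)
      (by rw [src_bb hsrc, z.rng_seg]) (cseg_pf1 hd hsrc (le_refl m)) (cseg_pf1 hd hsrc h))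
  src_seg m n h := by
    unfold cseg
    refine (Λ.src_ini _ _ _).trans
      (Eq.trans ?_ (Λ.ini_zero' (by funext i; simp) _).symm)
    exact congrArg Λ.rng (Λ.tail_tail
      (by funext i; have := Pi.le_def.mp h i; simp only [Pi.add_apply, Pi.sub_apply]; omega)
      _ _ _).symm
  comp_seg m n o h1 h2 := by
    unfold cseg
    have e1 : Λ.tail (bb α z o) m (cseg_pf1 hd hsrc (h1.trans h2)) =
        Λ.comp (Λ.tail (bb α z n) m (cseg_pf1 hd hsrc h1)) (z.seg n o h2) :=
      Λ.tail_of_eq_comp (bb_mono hsrc h2) (by rw [src_bb hsrc, z.rng_seg]) _ _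
    have hA : n - m ≤ Λ.d (Λ.tail (bb α z o) m (cseg_pf1 hd hsrc (h1.trans h2))) := by
      rw [Λ.d_tail, d_bb N hd hsrc]
      exact Pi.le_def.mpr fun i => by
        have := Pi.le_def.mp h1 i; have := Pi.le_def.mp h2 i
        simp only [Pi.add_apply, Pi.sub_apply]; omega
    have hB : o - n ≤ Λ.d (Λ.tail (Λ.tail (bb α z o) m
        (cseg_pf1 hd hsrc (h1.trans h2))) (n - m) hA) := by
      rw [Λ.d_tail, Λ.d_tail, d_bb N hd hsrc]
      exact Pi.le_def.mpr fun i => by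
        have := Pi.le_def.mp h1 i; have := Pi.le_def.mp h2 i
        simp only [Pi.add_apply, Pi.sub_apply]; omega
    have en : n = m + (n - m) := by
      funext i; have := Pi.le_def.mp h1 i
      simp only [Pi.add_apply, Pi.sub_apply]; omega
    have eo : o - m = (n - m) + (o - n) := by
      funext i; have := Pi.le_def.mp h1 i; have := Pi.le_def.mp h2 i
      simp only [Pi.add_apply, Pi.sub_apply]; omega
    exact (congrArg₂ Λ.comp
      ((Λ.ini_of_eq_comp e1 (by rw [Λ.src_tail, src_bb hsrc, z.rng_seg])
        (cseg_pf2 hd hsrc h1) hA).symm)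
      (Λ.ini_congrA (Λ.tail_tail en (cseg_pf1 hd hsrc (h1.trans h2)) hA
        (cseg_pf1 hd hsrc h2)) (cseg_pf2 hd hsrc h2) hB)).trans
      ((Λ.ini_add eo hA hB (cseg_pf2 hd hsrc (h1.trans h2))).symm)

theorem concat_seg (α : Λ.M) (N : Fin k → ℕ) (z : InfPath Λ) (hd : Λ.d α = N)
    (hsrc : Λ.src α = z.vert 0) :
    (concat α N z hd hsrc).seg 0 N zero_le = α := by
  show cseg α N z hd hsrc 0 N zero_le = α
  unfold cseg
  have hN : N ≤ Λ.d (bb α z N) := by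
    rw [d_bb N hd hsrc]
    exact Pi.le_def.mpr fun i => by simp only [Pi.add_apply]; omega
  refine (Λ.ini_congrA (Λ.tail_zero' rfl _) _ ?_).trans
    ((Λ.ini_congrM (show N - 0 = N by funext i; simp) _ hN).trans
      (Λ.ini_eq hN (src_rng_bb hsrc N) rfl hd))
  rw [d_bb N hd hsrc]
  exact Pi.le_def.mpr fun i => by simp only [Pi.add_apply, Pi.sub_apply, Pi.zero_apply]; omega

theorem concat_shift (α : Λ.M) (N : Fin k → ℕ) (z : InfPath Λ) (hd : Λ.d α = N)
    (hsrc : Λ.src α = z.vert 0) :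
    (concat α N z hd hsrc).shift N = z := by
  refine ext' fun m n h => ?_
  show cseg α N z hd hsrc (m + N) (n + N) (add_le_add h (le_refl N)) = z.seg m n h
  unfold cseg
  have hmn : m ≤ n + N := le_trans h (Pi.le_def.mpr fun i => by simp only [Pi.add_apply]; omega)
  have hq : N ≤ Λ.d (bb α z (n + N)) := by
    rw [d_bb N hd hsrc]
    exact Pi.le_def.mpr fun i => by simp only [Pi.add_apply]; omega
  have hr : m ≤ Λ.d (Λ.tail (bb α z (n + N)) N hq) := by
    rw [Λ.d_tail, d_bb N hd hsrc]
    exact Pi.le_def.mpr fun i => by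
      have := Pi.le_def.mp h i
      simp only [Pi.add_apply, Pi.sub_apply]; omega
  have h2' : m ≤ Λ.d (z.seg 0 (n + N) zero_le) := by
    rw [z.d_seg]
    exact Pi.le_def.mpr fun i => by
      have := Pi.le_def.mp h i
      simp only [Pi.sub_apply, Pi.zero_apply, Pi.add_apply]; omega
  have h3' : n - m ≤ Λ.d (z.seg m (n + N) hmn) := by
    rw [z.d_seg]
    exact Pi.le_def.mpr fun i => by
      have := Pi.le_def.mp h i
      simp only [Pi.sub_apply, Pi.add_apply]; omega
  have e0 : Λ.tail (bb α z (n + N)) (m + N)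
      (cseg_pf1 hd hsrc (add_le_add h (le_refl N))) = z.seg m (n + N) hmn :=
    (Λ.tail_tail (add_comm m N) hq hr _).trans
      ((Λ.tail_congrA (Λ.tail_eq hq (src_rng_bb hsrc (n + N)) rfl hd) hr h2').trans
        (Λ.tail_eq h2' (by rw [z.src_seg, z.rng_seg])
          (z.comp_seg 0 m (n + N) zero_le hmn)
          (by rw [z.d_seg]; funext i; simp)))
  have h4 : (n + N) - (m + N) ≤ Λ.d (z.seg m (n + N) hmn) := by
    rw [z.d_seg]
    exact Pi.le_def.mpr fun i => by
      have := Pi.le_def.mp h i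
      simp only [Pi.sub_apply, Pi.add_apply]; omega
  have hnn : n ≤ n + N := Pi.le_def.mpr fun i => by simp only [Pi.add_apply]; omega
  exact (Λ.ini_congrA e0 _ h4).trans
    ((Λ.ini_congrM (show (n + N) - (m + N) = n - m by
        funext i; simp only [Pi.sub_apply, Pi.add_apply]; omega) h4 h3').trans
      (Λ.ini_eq h3' (by rw [z.src_seg, z.rng_seg])
        (z.comp_seg m n (n + N) h hnn) (z.d_seg m n h)))

end InfPath

namespace InfPath

variable {k : ℕ} {Λ : KGraph k}

theorem cyl_mono {w y : InfPath Λ} {N N' : Fin k → ℕ} (hNN : N ≤ N')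
    (hw : w.seg 0 N' zero_le = y.seg 0 N' zero_le) :
    w.seg 0 N zero_le = y.seg 0 N zero_le := by
  have hle : ∀ u : InfPath Λ, N - 0 ≤ Λ.d (u.seg 0 N' zero_le) := fun u => by
    rw [u.d_seg]
    exact Pi.le_def.mpr fun i => by
      have := Pi.le_def.mp hNN i
      simp only [Pi.sub_apply, Pi.zero_apply]; omega
  have key : ∀ u : InfPath Λ, u.seg 0 N zero_le =
      Λ.ini (u.seg 0 N' zero_le) (N - 0) (hle u) := fun u =>
    (Λ.ini_eq (hle u) (by rw [u.src_seg, u.rng_seg])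
      (u.comp_seg 0 N N' zero_le hNN) (u.d_seg 0 N zero_le)).symm
  rw [key w, key y]
  exact Λ.ini_congrA hw _ _

theorem exists_cyl (y : InfPath Λ) {U : Set (InfPath Λ)}
    (hU : TopologicalSpace.GenerateOpen
      {S | ∃ a : Λ.M, S = {x : InfPath Λ | x.seg 0 (Λ.d a) zero_le = a}} U)
    (hy : y ∈ U) :
    ∃ N : Fin k → ℕ,
      {w : InfPath Λ | w.seg 0 N zero_le = y.seg 0 N zero_le} ⊆ U := by
  revert hy
  induction hU with
  | basic S hS =>
    obtain ⟨a, rfl⟩ := hS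
    intro hy
    exact ⟨Λ.d a, fun w hw => hw.trans hy⟩
  | univ => exact fun _ => ⟨0, fun w _ => trivial⟩
  | inter U V hU hV ihU ihV =>
    intro hy
    obtain ⟨N1, h1⟩ := ihU hy.1
    obtain ⟨N2, h2⟩ := ihV hy.2
    exact ⟨N1 ⊔ N2, fun w hw => ⟨h1 (cyl_mono le_sup_left hw), h2 (cyl_mono le_sup_right hw)⟩⟩
  | sUnion s hs ih =>
    intro hy
    obtain ⟨U, hUs, hyU⟩ := hy
    obtain ⟨N, hN⟩ := ih U hUs hyU
    exact ⟨N, fun w hw => ⟨U, hUs, hN hw⟩⟩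

end InfPath

/-- For a row-finite `k`-graph `Λ` without sources, the following are equivalent:
(1) every shift-equivalence class `[x]` is closed in `Λ^∞` (cylinder topology);
(2) for every `x ∈ Λ^∞`, every path in `Λ^∞` that is frequently divertable to `[x]`
is shift equivalent to `x`. -/
theorem stmt8 {k : ℕ} (hk : 1 ≤ k) (Λ : KGraph k) (hrf : Λ.RowFinite)
    (hns : Λ.NoSources) :
    (∀ x : InfPath Λ, IsClosed {z : InfPath Λ | InfPath.ShiftEquiv z x}) ↔
    (∀ x y : InfPath Λ, InfPath.FreqDiv y x → InfPath.ShiftEquiv y x) := by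
  constructor
  · -- (1) → (2)
    intro H x y hyx
    refine (H x).closure_subset ?_
    rw [mem_closure_iff]
    intro o ho hyo
    obtain ⟨N, hN⟩ := InfPath.exists_cyl y ho hyo
    obtain ⟨z, hz0, hzx⟩ := hyx N
    have hd : Λ.d (y.seg 0 N zero_le) = N := by
      rw [y.d_seg]; funext i; simp
    have hsrc : Λ.src (y.seg 0 N zero_le) = z.vert 0 := by
      rw [y.src_seg]; exact hz0.symm
    refine ⟨InfPath.concat (y.seg 0 N zero_le) N z hd hsrc, hN ?_, ?_⟩
    · exact InfPath.concat_seg _ _ _ _ _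
    · refine InfPath.ShiftEquiv.trans' ⟨_, N, 0, rfl, ?_⟩ hzx
      rw [InfPath.shift_zero]
      exact InfPath.concat_shift _ _ _ _ _
  · -- (2) → (1)
    intro H x
    refine isClosed_of_closure_subset fun y hy => ?_
    refine H x y fun n => ?_
    set a := y.seg 0 n zero_le with ha
    have hda : Λ.d a = n := by rw [ha, y.d_seg]; funext i; simp
    have hopen : IsOpen {w : InfPath Λ | w.seg 0 (Λ.d a) zero_le = a} :=
      TopologicalSpace.GenerateOpen.basic _ ⟨a, rfl⟩
    have hmem : y ∈ {w : InfPath Λ | w.seg 0 (Λ.d a) zero_le = a} :=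
      y.seg_congr rfl hda zero_le zero_le
    obtain ⟨w, hwZ, hwS⟩ := mem_closure_iff.mp hy _ hopen hmem
    refine ⟨w.shift n, ?_, InfPath.ShiftEquiv.trans' (InfPath.shiftEquiv_shift w n) hwS⟩
    show w.seg (0 + n) (0 + n) _ = y.vert n
    have := congrArg Λ.src hwZ
    rw [w.src_seg, ha, y.src_seg] at this
    exact (w.seg_congr (zero_add n) (zero_add n) _ _).trans
      ((w.seg_congr hda.symm hda.symm le_rfl le_rfl).trans this)
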